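/- arXiv:2107.01721 — 5 statements merged into one kernel-verified Lean document; each statement's English description precedes it below -/
import Mathlib

section
/- Let U = {0, 1, …, N−1}, let p₁, …, p_t be distinct primes, and define h(u) = { (i, u mod p_i) : 1 ≤ i ≤ t }. Then for every S ⊆ U, |⋃_{u ∈ S} h(u)| ≥ t·|S| − |S|²·log₂ N. -/
open Finset

lemma collisionAux {N t : ℕ} (hN : 2 ≤ N) (p : Fin t → ℕ) (hp : ∀ i, (p i).Prime)
    (hinj : Function.Injective p) {u v : ℕ} (huv : u ≠ v) (hu : u < N) (hv : v < N) :
    ((((Finset.univ.image fun i : Fin t => (i, u % p i)) ∩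
        (Finset.univ.image fun i : Fin t => (i, v % p i))).card : ℝ) ≤ Real.logb 2 N) := by
  set d := max u v - min u v with hdd
  have hd : 0 < d := by omega
  have hdN : d < N := lt_of_le_of_lt (Nat.sub_le _ _) (by simp [hu, hv, max_lt_iff])
  set F : Finset (Fin t) := Finset.univ.filter (fun i => u % p i = v % p i) with hF
  have hsub : (Finset.univ.image fun i : Fin t => (i, u % p i)) ∩
        (Finset.univ.image fun i : Fin t => (i, v % p i)) ⊆
        F.image (fun i => (i, u % p i)) := by
    intro x hx
    simp only [mem_inter, mem_image, mem_univ, true_and] at hx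
    obtain ⟨⟨i, hi⟩, ⟨j, hj⟩⟩ := hx
    refine mem_image.2 ⟨i, ?_, hi⟩
    have hij : (i, u % p i) = (j, v % p j) := hi.trans hj.symm
    have h1 : i = j := congrArg Prod.fst hij
    have h2 : u % p i = v % p j := congrArg Prod.snd hij
    subst h1
    simp [hF, h2]
  have hcardF : ∀ i ∈ F, p i ∣ d := by
    intro i hi
    have : u % p i = v % p i := by simpa [hF] using hi
    rcases le_total u v with h | h
    · have := (Nat.modEq_iff_dvd' h).1 this
      simpa [hdd, max_eq_right h, min_eq_left h] using this
    · have := (Nat.modEq_iff_dvd' h).1 this.symm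
      simpa [hdd, max_eq_left h, min_eq_right h] using this
  -- product of primes in image divides d
  have hGcard : (F.image p).card = F.card := Finset.card_image_of_injective _ hinj
  have hprod : ∏ q ∈ F.image p, q ∣ d := by
    apply Finset.prod_primes_dvd
    · intro q hq
      obtain ⟨i, _, rfl⟩ := mem_image.1 hq
      exact (hp i).prime
    · intro q hq
      obtain ⟨i, hi, rfl⟩ := mem_image.1 hq
      exact hcardF i hi
  have hpow : 2 ^ F.card ≤ d := by
    calc 2 ^ F.card = 2 ^ (F.image p).card := by rw [hGcard]
    _ ≤ ∏ q ∈ F.image p, q := Finset.pow_card_le_prod _ _ _ (by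
        intro q hq
        obtain ⟨i, _, rfl⟩ := mem_image.1 hq
        exact (hp i).two_le)
    _ ≤ d := Nat.le_of_dvd hd hprod
  have hcard_le : ((Finset.univ.image fun i : Fin t => (i, u % p i)) ∩
        (Finset.univ.image fun i : Fin t => (i, v % p i))).card ≤ F.card :=
    le_trans (Finset.card_le_card hsub) Finset.card_image_le
  have hlog : (F.card : ℝ) ≤ Real.logb 2 N := by
    rw [Real.le_logb_iff_rpow_le one_lt_two (by positivity : (0:ℝ) < N)]
    have : (2:ℝ) ^ (F.card : ℝ) = ((2 ^ F.card : ℕ) : ℝ) := by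
      rw [Real.rpow_natCast]; push_cast; ring
    rw [this]
    exact_mod_cast le_of_lt (lt_of_le_of_lt hpow hdN)
  exact le_trans (by exact_mod_cast hcard_le) hlog

theorem stmt13 (N t : ℕ) (hN : 2 ≤ N) (p : Fin t → ℕ) (hp : ∀ i, (p i).Prime)
    (hinj : Function.Injective p) (S : Finset ℕ) (hS : ∀ u ∈ S, u < N) :
    (t : ℝ) * S.card - (S.card : ℝ) ^ 2 * Real.logb 2 N
      ≤ ((S.biUnion fun u => Finset.univ.image fun i : Fin t => (i, u % p i)).card : ℝ) := by
  set L := Real.logb 2 N with hL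
  have hL0 : 0 ≤ L := Real.logb_nonneg one_lt_two (by exact_mod_cast Nat.one_le_of_lt hN)
  set h : ℕ → Finset (Fin t × ℕ) := fun u => Finset.univ.image fun i : Fin t => (i, u % p i)
      with hh
  have hcardh : ∀ u, (h u).card = t := by
    intro u
    rw [hh]
    rw [Finset.card_image_of_injective]
    · simp
    · intro i j hij
      simpa using congrArg Prod.fst hij
  have main : ∀ T : Finset ℕ, (∀ u ∈ T, u < N) →
      (t : ℝ) * T.card - (T.card : ℝ) ^ 2 * L ≤ ((T.biUnion h).card : ℝ) := by
    intro T
    induction T using Finset.induction_on with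
    | empty => intro _; simp
    | @insert a T' ha ih =>
      intro hT
      have haN : a < N := hT a (mem_insert_self a T')
      have hT' : ∀ u ∈ T', u < N := fun u hu => hT u (mem_insert_of_mem hu)
      have ih' := ih hT'
      have hbu : (insert a T').biUnion h = h a ∪ T'.biUnion h := biUnion_insert ..
      have hkey : ((h a ∩ T'.biUnion h).card : ℝ) ≤ T'.card * L := by
        have hsub : h a ∩ T'.biUnion h ⊆ T'.biUnion (fun v => h a ∩ h v) := by
          intro x hx
          obtain ⟨hx1, hx2⟩ := mem_inter.1 hx
          obtain ⟨v, hv, hxv⟩ := mem_biUnion.1 hx2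
          exact mem_biUnion.2 ⟨v, hv, mem_inter.2 ⟨hx1, hxv⟩⟩
        calc ((h a ∩ T'.biUnion h).card : ℝ)
            ≤ ((T'.biUnion (fun v => h a ∩ h v)).card : ℝ) := by
              exact_mod_cast Finset.card_le_card hsub
          _ ≤ ∑ v ∈ T', ((h a ∩ h v).card : ℝ) := by
              exact_mod_cast Finset.card_biUnion_le
          _ ≤ ∑ v ∈ T', L := by
              apply Finset.sum_le_sum
              intro v hv
              exact collisionAux hN p hp hinj (fun hav => ha (hav ▸ hv)) haN (hT' v hv)
          _ = T'.card * L := by rw [Finset.sum_const, nsmul_eq_mul]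
      have hcardeq : ((h a ∪ T'.biUnion h).card : ℝ)
          = (h a).card + ((T'.biUnion h).card : ℝ) - ((h a ∩ T'.biUnion h).card : ℝ) := by
        have := Finset.card_union_add_card_inter (h a) (T'.biUnion h)
        have := congrArg (Nat.cast : ℕ → ℝ) this
        push_cast at this
        linarith
      have hstep : (t : ℝ) + ((T'.biUnion h).card : ℝ) - T'.card * L
          ≤ (((insert a T').biUnion h).card : ℝ) := by
        rw [hbu, hcardeq, hcardh a]
        linarith
      have hcardins : ((insert a T').card : ℝ) = T'.card + 1 := by
        rw [Finset.card_insert_of_notMem ha]; push_cast; ring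
      rw [hcardins]
      nlinarith [ih', hstep, hL0, (Nat.cast_nonneg T'.card : (0:ℝ) ≤ T'.card)]
  calc (t : ℝ) * S.card - (S.card : ℝ) ^ 2 * Real.logb 2 N
      ≤ ((S.biUnion h).card : ℝ) := main S hS
    _ = _ := rfl
end

section
/- Let h : U → Finset U' with |h(u)| = t for all u ∈ U, and let S₁, S₂ ⊆ U be finite. Suppose for all distinct u, u' ∈ S₁ ∪ S₂ the collision bound |h(u) ∩ h(u')| ≤ C holds. Then | |h(S₁) ∩ h(S₂)| − t·|S₁ ∩ S₂| | ≤ |S₁ ∪ S₂|² · C, where h(T) = ⋃_{u ∈ T} h(u). -/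
private lemma aux_lower {U U' : Type*} [DecidableEq U] [DecidableEq U'] (t C : ℕ)
    (h : U → Finset U') (ht : ∀ u, (h u).card = t) (s : Finset U)
    (hC : ∀ u ∈ s, ∀ u' ∈ s, u ≠ u' → (h u ∩ h u').card ≤ C) :
    (t * s.card : ℤ) ≤ (s.biUnion h).card + s.card ^ 2 * C := by
  induction s using Finset.induction_on with
  | empty => simp
  | @insert a s ha ih =>
    have hsub : ∀ u ∈ s, ∀ u' ∈ s, u ≠ u' → (h u ∩ h u').card ≤ C := by
      intro u hu u' hu' hne
      exact hC u (Finset.mem_insert_of_mem hu) u' (Finset.mem_insert_of_mem hu') hne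
    have IH := ih hsub
    have hbi : (insert a s).biUnion h = h a ∪ s.biUnion h := Finset.biUnion_insert ..
    have hcard : (h a ∪ s.biUnion h).card + (h a ∩ s.biUnion h).card
        = (h a).card + (s.biUnion h).card := Finset.card_union_add_card_inter _ _
    have hint : (h a ∩ s.biUnion h).card ≤ s.card * C := by
      have : h a ∩ s.biUnion h = s.biUnion (fun u => h a ∩ h u) := by
        ext x; simp [Finset.mem_biUnion]; tauto
      rw [this]
      calc (s.biUnion fun u => h a ∩ h u).card ≤ ∑ u ∈ s, (h a ∩ h u).card :=
            Finset.card_biUnion_le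
        _ ≤ ∑ u ∈ s, C := by
            apply Finset.sum_le_sum
            intro u hu
            refine hC a (Finset.mem_insert_self _ _) u (Finset.mem_insert_of_mem hu) ?_
            rintro rfl; exact ha hu
        _ = s.card * C := by simp [mul_comm]
    rw [hbi, Finset.card_insert_of_notMem ha]
    have hta := ht a
    have h1 : ((h a ∪ s.biUnion h).card : ℤ)
        = t + (s.biUnion h).card - (h a ∩ s.biUnion h).card := by
      have := congrArg (Nat.cast (R := ℤ)) hcard
      push_cast at this
      rw [hta] at this
      linarith
    have h2 : ((h a ∩ s.biUnion h).card : ℤ) ≤ s.card * C := by exact_mod_cast hint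
    push_cast
    nlinarith [Int.natCast_nonneg s.card, Int.natCast_nonneg C]

theorem stmt15 {U U' : Type*} [DecidableEq U] [DecidableEq U'] (t C : ℕ)
    (h : U → Finset U') (ht : ∀ u, (h u).card = t) (S₁ S₂ : Finset U)
    (hC : ∀ u ∈ S₁ ∪ S₂, ∀ u' ∈ S₁ ∪ S₂, u ≠ u' → (h u ∩ h u').card ≤ C) :
    |((S₁.biUnion h ∩ S₂.biUnion h).card : ℤ) - t * (S₁ ∩ S₂).card|
      ≤ (S₁ ∪ S₂).card ^ 2 * C := by
  set I := S₁ ∩ S₂ with hI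
  set A := S₁.biUnion h ∩ S₂.biUnion h with hA
  set n := (S₁ ∪ S₂).card with hn
  have hIsub : ∀ u ∈ I, u ∈ S₁ ∪ S₂ := by
    intro u hu
    exact Finset.mem_union_left _ (Finset.mem_of_mem_inter_left hu)
  have hIn : I.card ≤ n := Finset.card_le_card (fun u hu => hIsub u hu)
  -- Lower bound
  have hlow : (t : ℤ) * I.card - n ^ 2 * C ≤ A.card := by
    have h1 : I.biUnion h ⊆ A := by
      intro x hx
      rw [Finset.mem_biUnion] at hx
      obtain ⟨u, hu, hxu⟩ := hx
      rw [hI, Finset.mem_inter] at hu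
      exact Finset.mem_inter.2 ⟨Finset.mem_biUnion.2 ⟨u, hu.1, hxu⟩,
        Finset.mem_biUnion.2 ⟨u, hu.2, hxu⟩⟩
    have h2 := aux_lower t C h ht I (fun u hu u' hu' hne => hC u (hIsub u hu) u' (hIsub u' hu') hne)
    have h3 : (I.biUnion h).card ≤ A.card := Finset.card_le_card h1
    have h4 : ((I.biUnion h).card : ℤ) ≤ A.card := by exact_mod_cast h3
    have h5 : (I.card : ℤ) ^ 2 * C ≤ (n : ℤ) ^ 2 * C := by
      have : (I.card : ℤ) ≤ n := by exact_mod_cast hIn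
      have h0 : (0:ℤ) ≤ I.card := Int.natCast_nonneg _
      exact mul_le_mul_of_nonneg_right (pow_le_pow_left₀ h0 this 2) (Int.natCast_nonneg C)
    linarith
  -- Upper bound
  have hhigh : (A.card : ℤ) ≤ t * I.card + n ^ 2 * C := by
    set P := (S₁ ∪ S₂).offDiag.biUnion (fun p => h p.1 ∩ h p.2) with hP
    have hsub : A ⊆ I.biUnion h ∪ P := by
      intro x hx
      rw [hA, Finset.mem_inter, Finset.mem_biUnion, Finset.mem_biUnion] at hx
      obtain ⟨⟨u, hu, hxu⟩, ⟨u', hu', hxu'⟩⟩ := hx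
      by_cases huu : u = u'
      · subst huu
        exact Finset.mem_union_left _ (Finset.mem_biUnion.2
          ⟨u, Finset.mem_inter.2 ⟨hu, hu'⟩, hxu⟩)
      · refine Finset.mem_union_right _ (Finset.mem_biUnion.2 ⟨(u, u'), ?_, ?_⟩)
        · rw [Finset.mem_offDiag]
          exact ⟨Finset.mem_union_left _ hu, Finset.mem_union_right _ hu', huu⟩
        · exact Finset.mem_inter.2 ⟨hxu, hxu'⟩
    have hPcard : P.card ≤ n ^ 2 * C := by
      calc P.card ≤ ∑ p ∈ (S₁ ∪ S₂).offDiag, (h p.1 ∩ h p.2).card := Finset.card_biUnion_le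
        _ ≤ ∑ p ∈ (S₁ ∪ S₂).offDiag, C := by
            apply Finset.sum_le_sum
            intro p hp
            rw [Finset.mem_offDiag] at hp
            exact hC p.1 hp.1 p.2 hp.2.1 hp.2.2
        _ = (S₁ ∪ S₂).offDiag.card * C := by simp [mul_comm]
        _ ≤ n ^ 2 * C := by
            apply Nat.mul_le_mul_right
            rw [Finset.offDiag_card, pow_two]
            exact Nat.sub_le _ _
    have hIbi : (I.biUnion h).card ≤ t * I.card := by
      calc (I.biUnion h).card ≤ ∑ u ∈ I, (h u).card := Finset.card_biUnion_le
        _ = t * I.card := by simp [ht, mul_comm]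
    have := Finset.card_le_card hsub
    have h6 : A.card ≤ (I.biUnion h).card + P.card :=
      this.trans (Finset.card_union_le _ _)
    have := h6.trans (Nat.add_le_add hIbi hPcard)
    exact_mod_cast this
  rw [abs_sub_le_iff]
  constructor <;> linarith
end

section
/- Let S ⊆ U be finite with |S| = s, let h : U → Finset U' with |h(u)| = t for all u, and suppose |h(S)| ≥ t·s − B where h(S) = ⋃_{u∈S} h(u). If |U'| ≥ t·s, then there exists a function h* : S → Finset U' such that |h*(u)| = t for all u ∈ S, the sets h*(u) (u ∈ S) are pairwise disjoint, and Σ_{u ∈ S} |h(u) Δ h*(u)| ≤ 2B, where Δ denotes symmetric difference. -/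
lemma exists_partition16 {U U' : Type*} [DecidableEq U] [DecidableEq U']
    (h : U → Finset U') (S : Finset U) :
    ∃ g : U → Finset U', (∀ u ∈ S, g u ⊆ h u) ∧
      (∀ u ∈ S, ∀ v ∈ S, u ≠ v → Disjoint (g u) (g v)) ∧
      S.biUnion g = S.biUnion h := by
  classical
  induction S using Finset.induction_on with
  | empty => exact ⟨fun _ => ∅, by simp, by simp, by simp⟩
  | @insert a S ha ih =>
    obtain ⟨g, hsub, hdisj, hun⟩ := ih
    refine ⟨Function.update g a (h a \ S.biUnion g), ?_, ?_, ?_⟩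
    · intro u hu
      rcases Finset.mem_insert.mp hu with heq | hu
      · rw [heq, Function.update_self]
        exact Finset.sdiff_subset
      · have hne : u ≠ a := ne_of_mem_of_not_mem hu ha
        simpa [Function.update_of_ne hne] using hsub u hu
    · intro u hu v hv huv
      have hcase : ∀ w ∈ S, Disjoint (h a \ S.biUnion g) (g w) := fun w hw =>
        Finset.sdiff_disjoint.mono_right (Finset.subset_biUnion_of_mem g hw)
      rcases Finset.mem_insert.mp hu with heq | hu
      · rcases Finset.mem_insert.mp hv with heq' | hv
        · exact absurd (heq.trans heq'.symm) huv
        · rw [heq, Function.update_self,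
            Function.update_of_ne (ne_of_mem_of_not_mem hv ha)]
          exact hcase v hv
      · rcases Finset.mem_insert.mp hv with heq' | hv
        · rw [heq', Function.update_self,
            Function.update_of_ne (ne_of_mem_of_not_mem hu ha)]
          exact (hcase u hu).symm
        · rw [Function.update_of_ne (ne_of_mem_of_not_mem hu ha),
            Function.update_of_ne (ne_of_mem_of_not_mem hv ha)]
          exact hdisj u hu v hv huv
    · have hSb : S.biUnion (Function.update g a (h a \ S.biUnion g)) = S.biUnion g := by
        apply Finset.biUnion_congr rfl
        intro u hu
        exact Function.update_of_ne (ne_of_mem_of_not_mem hu ha) _ g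
      rw [Finset.biUnion_insert, Finset.biUnion_insert, hSb, Function.update_self,
        Finset.sdiff_union_self_eq_union, hun]

lemma exists_fill16 {U U' : Type*} [DecidableEq U] [DecidableEq U']
    (S : Finset U) (n : U → ℕ) :
    ∀ (A : Finset U'), (∑ u ∈ S, n u ≤ A.card) →
    ∃ F : U → Finset U', (∀ u ∈ S, F u ⊆ A) ∧ (∀ u ∈ S, (F u).card = n u) ∧
      (∀ u ∈ S, ∀ v ∈ S, u ≠ v → Disjoint (F u) (F v)) := by
  classical
  induction S using Finset.induction_on with
  | empty => exact fun A _ => ⟨fun _ => ∅, by simp, by simp, by simp⟩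
  | @insert a S ha ih =>
    intro A hA
    rw [Finset.sum_insert ha] at hA
    obtain ⟨Fa, hFaA, hFacard⟩ :=
      Finset.exists_subset_card_eq (le_trans (Nat.le_add_right _ _) hA)
    have hrest : ∑ u ∈ S, n u ≤ (A \ Fa).card := by
      rw [Finset.card_sdiff_of_subset hFaA, hFacard]
      omega
    obtain ⟨F, hFA, hFcard, hFdisj⟩ := ih (A \ Fa) hrest
    refine ⟨Function.update F a Fa, ?_, ?_, ?_⟩
    · intro u hu
      rcases Finset.mem_insert.mp hu with heq | hu
      · rw [heq, Function.update_self]; exact hFaA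
      · rw [Function.update_of_ne (ne_of_mem_of_not_mem hu ha)]
        exact (hFA u hu).trans Finset.sdiff_subset
    · intro u hu
      rcases Finset.mem_insert.mp hu with heq | hu
      · rw [heq, Function.update_self, hFacard]
      · rw [Function.update_of_ne (ne_of_mem_of_not_mem hu ha)]
        exact hFcard u hu
    · intro u hu v hv huv
      have hcase : ∀ w ∈ S, Disjoint Fa (F w) := fun w hw =>
        ((Finset.sdiff_disjoint.mono_left (hFA w hw)).symm)
      rcases Finset.mem_insert.mp hu with heq | hu
      · rcases Finset.mem_insert.mp hv with heq' | hv
        · exact absurd (heq.trans heq'.symm) huv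
        · rw [heq, Function.update_self,
            Function.update_of_ne (ne_of_mem_of_not_mem hv ha)]
          exact hcase v hv
      · rcases Finset.mem_insert.mp hv with heq' | hv
        · rw [heq', Function.update_self,
            Function.update_of_ne (ne_of_mem_of_not_mem hu ha)]
          exact (hcase u hu).symm
        · rw [Function.update_of_ne (ne_of_mem_of_not_mem hu ha),
            Function.update_of_ne (ne_of_mem_of_not_mem hv ha)]
          exact hFdisj u hu v hv huv

theorem stmt16 {U U' : Type*} [DecidableEq U] [DecidableEq U'] [Fintype U']
    (t B s : ℕ) (h : U → Finset U') (ht : ∀ u, (h u).card = t)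
    (S : Finset U) (hs : S.card = s)
    (hB : t * s ≤ (S.biUnion h).card + B)
    (hU' : t * s ≤ Fintype.card U') :
    ∃ hstar : U → Finset U',
      (∀ u ∈ S, (hstar u).card = t) ∧
      (∀ u ∈ S, ∀ u' ∈ S, u ≠ u' → Disjoint (hstar u) (hstar u')) ∧
      ∑ u ∈ S, (symmDiff (h u) (hstar u)).card ≤ 2 * B := by
  classical
  set T : Finset U' := S.biUnion h with hT
  obtain ⟨g, hgsub, hgdisj, hgun⟩ := exists_partition16 h S
  have hgle : ∀ u ∈ S, (g u).card ≤ t := fun u hu =>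
    (ht u) ▸ Finset.card_le_card (hgsub u hu)
  have hsum_g : ∑ u ∈ S, (g u).card = T.card := by
    rw [hT, ← hgun]
    exact (Finset.card_biUnion hgdisj).symm
  -- deficiency
  set n : U → ℕ := fun u => t - (g u).card with hn
  have hsum_n : ∑ u ∈ S, n u + T.card = t * s := by
    rw [← hsum_g, ← Finset.sum_add_distrib]
    have : ∀ u ∈ S, n u + (g u).card = t := by
      intro u hu
      have h1 := hgle u hu
      have h2 : n u = t - (g u).card := rfl
      omega
    rw [Finset.sum_congr rfl this, Finset.sum_const, hs, smul_eq_mul, mul_comm]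
  have hTcard : T.card ≤ Fintype.card U' := Finset.card_le_univ T
  have hAcard : (Finset.univ \ T).card = Fintype.card U' - T.card := by
    rw [Finset.card_sdiff_of_subset (Finset.subset_univ T), Finset.card_univ]
  have hfillable : ∑ u ∈ S, n u ≤ (Finset.univ \ T).card := by
    rw [hAcard]; omega
  obtain ⟨F, hFA, hFcard, hFdisj⟩ := exists_fill16 S n (Finset.univ \ T) hfillable
  have hFT : ∀ u ∈ S, Disjoint (F u) T := fun u hu =>
    Finset.sdiff_disjoint.mono_left (hFA u hu)
  have hgT : ∀ u ∈ S, g u ⊆ T := fun u hu =>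
    (hgsub u hu).trans (Finset.subset_biUnion_of_mem h hu)
  have hhT : ∀ u ∈ S, h u ⊆ T := fun u hu => Finset.subset_biUnion_of_mem h hu
  refine ⟨fun u => g u ∪ F u, ?_, ?_, ?_⟩
  · intro u hu
    rw [Finset.card_union_of_disjoint ((hFT u hu).mono_right (hgT u hu)).symm,
      hFcard u hu]
    have h1 := hgle u hu
    have h2 : n u = t - (g u).card := rfl
    omega
  · intro u hu v hv huv
    refine Finset.disjoint_union_left.mpr ⟨?_, ?_⟩
    · exact Finset.disjoint_union_right.mpr
        ⟨hgdisj u hu v hv huv, ((hFT v hv).mono_right (hgT u hu)).symm⟩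
    · exact Finset.disjoint_union_right.mpr
        ⟨(hFT u hu).mono_right (hgT v hv), hFdisj u hu v hv huv⟩
  · have hterm : ∀ u ∈ S, (symmDiff (h u) (g u ∪ F u)).card = 2 * n u := by
      intro u hu
      have hFh : Disjoint (F u) (h u) := (hFT u hu).mono_right (hhT u hu)
      have h1 : h u \ (g u ∪ F u) = h u \ g u := by
        ext x
        simp only [Finset.mem_sdiff, Finset.mem_union, not_or]
        constructor
        · rintro ⟨hx, hg, _⟩; exact ⟨hx, hg⟩
        · rintro ⟨hx, hg⟩
          exact ⟨hx, hg, fun hF => (Finset.disjoint_left.mp hFh) hF hx⟩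
      have h2 : (g u ∪ F u) \ h u = F u := by
        ext x
        simp only [Finset.mem_sdiff, Finset.mem_union]
        constructor
        · rintro ⟨hgf, hx⟩
          rcases hgf with hg | hF
          · exact absurd (hgsub u hu hg) hx
          · exact hF
        · intro hF
          exact ⟨Or.inr hF, fun hx => (Finset.disjoint_left.mp hFh) hF hx⟩
      have hdisj' : Disjoint (h u \ (g u ∪ F u)) ((g u ∪ F u) \ h u) :=
        disjoint_sdiff_sdiff
      rw [symmDiff_def, Finset.sup_eq_union, Finset.card_union_of_disjoint hdisj',
        h1, h2, Finset.card_sdiff_of_subset (hgsub u hu), ht u, hFcard u hu]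
      have h3 := hgle u hu
      have h4 : n u = t - (g u).card := rfl
      omega
    rw [Finset.sum_congr rfl hterm, ← Finset.mul_sum]
    omega
end

section
/- Let f : A × B → ℕ and suppose ALG, OPT ∈ ℕ satisfy: OPT = max over (a,b) of f(a,b), and ALG is attained as f(a₀,b₀) for some pair with c⁻¹·OPT ≤ ALG ≤ OPT for a real c ≥ 1. If g : A × B → ℕ satisfies g(a,b) ≥ f(a,b) for all (a,b), and the number of pairs with g(a,b) ≠ f(a,b) is at most M, then among the M+1 pairs with the largest g-values there is a pair (a,b) with f(a,b) ≥ c⁻¹ · (max f). -/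
theorem stmt17 {A B : Type*} [Fintype A] [Fintype B] [Nonempty A] [Nonempty B]
    (f g : A × B → ℕ) (c : ℝ) (hc : 1 ≤ c) (OPT ALG : ℕ) (M : ℕ)
    (hOPT : ∀ p, f p ≤ OPT) (hOPTatt : ∃ p, f p = OPT)
    (hALG : ∃ p, f p = ALG)
    (hALGlo : c⁻¹ * OPT ≤ (ALG : ℝ)) (hALGhi : ALG ≤ OPT)
    (hfg : ∀ p, f p ≤ g p)
    (hM : (Finset.univ.filter fun p => g p ≠ f p).card ≤ M) :
    ∀ T : Finset (A × B), T.card = M + 1 → (∀ p ∈ T, ∀ q ∉ T, g q ≤ g p) →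
      ∃ p ∈ T, c⁻¹ * OPT ≤ (f p : ℝ) := by
  intro T hcard htop
  obtain ⟨pstar, hpstar⟩ := hOPTatt
  have hkey : c⁻¹ * OPT ≤ (OPT : ℝ) := by
    have h1 : c⁻¹ ≤ 1 := inv_le_one_of_one_le₀ hc
    nlinarith [Nat.cast_nonneg (α := ℝ) OPT]
  -- find p ∈ T with g p = f p
  have hsub : ¬ (T ⊆ Finset.univ.filter fun p => g p ≠ f p) := by
    intro h
    have := Finset.card_le_card h
    omega
  obtain ⟨p, hpT, hpne⟩ := Finset.not_subset.mp hsub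
  simp only [Finset.mem_filter, Finset.mem_univ, true_and, not_not] at hpne
  by_cases hps : pstar ∈ T
  · refine ⟨pstar, hps, ?_⟩
    rw [hpstar]
    exact hkey
  · refine ⟨p, hpT, ?_⟩
    have hfp : OPT ≤ f p := by
      have := htop p hpT pstar hps
      calc OPT = f pstar := hpstar.symm
        _ ≤ g pstar := hfg pstar
        _ ≤ g p := this
        _ = f p := hpne
    calc c⁻¹ * OPT ≤ (OPT : ℝ) := hkey
      _ ≤ (f p : ℝ) := by exact_mod_cast hfp
end

section
/- Let U be a finite set partitioned as U = ⋃_{τ ∈ {0,1}^k} U_τ, and let S₁, …, S_k ⊆ U. Define Val_τ(S₁,…,S_k) = |U_τ ∩ (⋂_{i:τ(i)=1} S_i) \ (⋃_{i:τ(i)=0} S_i)| and Val = Σ_τ Val_τ. For each τ, let S_i^τ = U_τ ∩ S_i if τ(i)=1 and S_i^τ = U_τ \ S_i if τ(i)=0, and set S_i' = ⋃_τ S_i^τ. Then Val(S₁,…,S_k) = |⋂_{i=1}^k S_i'|. -/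
theorem stmt19 {U : Type*} [Fintype U] [DecidableEq U] (k : ℕ) (hk : 1 ≤ k)
    (Upart : (Fin k → Bool) → Finset U)
    (hdisj : ∀ τ τ' : Fin k → Bool, τ ≠ τ' → Disjoint (Upart τ) (Upart τ'))
    (hcover : Finset.univ.biUnion Upart = (Finset.univ : Finset U))
    (S : Fin k → Finset U) :
    ∑ τ : Fin k → Bool,
      ((Upart τ ∩ ((Finset.univ.filter fun i => τ i = true).inf S)) \
        ((Finset.univ.filter fun i => τ i = false).sup S)).card
    = (Finset.univ.inf fun i : Fin k =>
        Finset.univ.biUnion fun τ : Fin k → Bool =>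
          if τ i then Upart τ ∩ S i else Upart τ \ S i).card := by
  set A : (Fin k → Bool) → Finset U := fun τ =>
    (Upart τ ∩ ((Finset.univ.filter fun i => τ i = true).inf S)) \
      ((Finset.univ.filter fun i => τ i = false).sup S) with hA
  have hAsub : ∀ τ, A τ ⊆ Upart τ := by
    intro τ x hx
    simp only [hA, Finset.mem_sdiff, Finset.mem_inter] at hx
    exact hx.1.1
  have hdisjA : ∀ τ ∈ (Finset.univ : Finset (Fin k → Bool)), ∀ τ' ∈ Finset.univ,
      τ ≠ τ' → Disjoint (A τ) (A τ') := fun τ _ τ' _ h =>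
    ((hdisj τ τ' h).mono (hAsub τ) (hAsub τ'))
  rw [← Finset.card_biUnion hdisjA]
  congr 1
  ext x
  -- the unique τ containing x
  have hmem : ∃ τ, x ∈ Upart τ := by
    have : x ∈ Finset.univ.biUnion Upart := by rw [hcover]; exact Finset.mem_univ x
    simpa using this
  obtain ⟨τ₀, hτ₀⟩ := hmem
  have huniq : ∀ τ, x ∈ Upart τ → τ = τ₀ := by
    intro τ hτ
    by_contra h
    exact Finset.disjoint_left.mp (hdisj τ τ₀ h) hτ hτ₀
  simp only [Finset.mem_biUnion, Finset.mem_univ, true_and, Finset.mem_inf,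
    Finset.mem_sdiff, Finset.mem_inter, Finset.mem_sup, Finset.mem_filter, hA]
  constructor
  · rintro ⟨τ, ⟨hxU, hin⟩, hout⟩ i -
    refine ⟨τ, ?_⟩
    cases hτi : τ i with
    | true => rw [if_pos rfl, Finset.mem_inter]
              exact ⟨hxU, hin i hτi⟩
    | false => rw [if_neg (by simp), Finset.mem_sdiff]
               exact ⟨hxU, fun hxS => hout ⟨i, hτi, hxS⟩⟩
  · intro h
    refine ⟨τ₀, ⟨hτ₀, ?_⟩, ?_⟩
    · intro i hτ₀i
      obtain ⟨τ, hτ⟩ := h i trivial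
      cases hτi : τ i with
      | true =>
        rw [if_pos hτi, Finset.mem_inter] at hτ
        exact hτ.2
      | false =>
        rw [if_neg (by simp [hτi]), Finset.mem_sdiff] at hτ
        have := huniq τ hτ.1
        rw [this] at hτi
        simp [hτ₀i] at hτi
    · rintro ⟨i, hτ₀i, hxS⟩
      obtain ⟨τ, hτ⟩ := h i trivial
      cases hτi : τ i with
      | true =>
        rw [if_pos hτi, Finset.mem_inter] at hτ
        have := huniq τ hτ.1
        rw [this] at hτi
        simp [hτ₀i] at hτi
      | false =>
        rw [if_neg (by simp [hτi]), Finset.mem_sdiff] at hτ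
        exact hτ.2 hxS
end
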